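/- Let T be strictly convex and differentiable and D_T the associated Bregman divergence. Suppose a trader with belief parameter θ̂ moves the market state from θ to θ' = λθ̂ + (1-λ)θ for some λ ∈ [0, 1]. Then the trader's expected profit under his belief, E_{x∼p(·;θ̂)}[⟨θ' - θ, φ(x)⟩ - T(θ') + T(θ)], equals D_T(θ, θ̂) - D_T(θ', θ̂) and is at least λ D_T(θ, θ̂) ≥ 0, with strict positivity when λ > 0 and θ ≠ θ̂. -/

import Mathlib

open RealInnerProductSpace MeasureTheory


-- gradient inequality: strict Bregman positivity
theorem aux_bregman_pos {d : ℕ} (T : EuclideanSpace ℝ (Fin d) → ℝ)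
    (gradT : EuclideanSpace ℝ (Fin d) → EuclideanSpace ℝ (Fin d))
    (hTconv : StrictConvexOn ℝ Set.univ T)
    (hgrad : ∀ x, HasGradientAt T (gradT x) x)
    (a b : EuclideanSpace ℝ (Fin d)) (hne : b ≠ a) :
    T a + ⟪b - a, gradT a⟫ < T b := by
  set v := b - a with hv
  set g : ℝ → ℝ := fun t => T (a + t • v) with hg
  have hline : ∀ t : ℝ, a + t • v = AffineMap.lineMap a b t := by
    intro t; simp [AffineMap.lineMap_apply, hv]; module
  have hgconv : ConvexOn ℝ Set.univ g := by
    have := (hTconv.convexOn).comp_affineMap (AffineMap.lineMap a b)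
    have h2 : ConvexOn ℝ (AffineMap.lineMap a b ⁻¹' Set.univ) (T ∘ AffineMap.lineMap a b) := this
    simpa [hg, Set.preimage_univ] using h2.congr (by intro t _; simp [Function.comp, hline t])
  have hderiv : HasDerivAt g ⟪gradT a, v⟫ 0 := by
    have hc : HasDerivAt (fun t : ℝ => a + t • v) v 0 := by
      simpa using ((hasDerivAt_id (0:ℝ)).smul_const v).const_add a
    have hF : HasFDerivAt T ((InnerProductSpace.toDual ℝ _) (gradT a)) (a + (0:ℝ) • v) := by
      simpa using (hgrad a).hasFDerivAt
    exact hF.comp_hasDerivAt (0:ℝ) hc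
  have hslope : ⟪gradT a, v⟫ ≤ slope g 0 (1/2) :=
    hgconv.le_slope_of_hasDerivAt (Set.mem_univ _) (Set.mem_univ _) (by norm_num) hderiv
  have hmid : g (1/2) < (1/2) * T a + (1/2) * T b := by
    have := hTconv.2 (Set.mem_univ a) (Set.mem_univ b) (Ne.symm hne)
      (by norm_num : (0:ℝ) < 1/2) (by norm_num : (0:ℝ) < 1/2) (by norm_num)
    have hpt : a + (2⁻¹ : ℝ) • v = (2⁻¹ : ℝ) • a + (2⁻¹ : ℝ) • b := by
      simp [hv]; module
    simpa [hg, hpt, smul_eq_mul] using this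
  have hslope2 : slope g 0 (1/2) < T b - T a := by
    have hgz : g 0 = T a := by simp [hg]
    rw [slope_def_field]; simp [div_eq_iff, hgz] at *
    nlinarith [hmid]
  have : ⟪gradT a, v⟫ < T b - T a := lt_of_le_of_lt hslope hslope2
  have hcomm : ⟪b - a, gradT a⟫ = ⟪gradT a, v⟫ := real_inner_comm _ _
  linarith [this, hcomm.le, hcomm.ge]

/-- Expected profit of an informative budget-limited trader. Let `T` be the
strictly convex differentiable log-partition/cost function with gradient
`∇T`, and let the trader's belief density `p(·;θ̂)` satisfy
`E_{x∼p(·;θ̂)}[φ x] = ∇T θ̂`. If the trader moves the market state from `θ` to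
`θ' = λ θ̂ + (1-λ) θ` with `λ ∈ [0,1]`, then his expected profit equals
`D_T(θ, θ̂) - D_T(θ', θ̂)`, is at least `λ D_T(θ, θ̂) ≥ 0`, and is strictly
positive when `λ > 0` and `θ ≠ θ̂`. -/
theorem informative_trader_expected_profit
    {d : ℕ} {X : Type*} [MeasurableSpace X] (ν : Measure X) [SigmaFinite ν]
    (φ : X → EuclideanSpace ℝ (Fin d))
    (T : EuclideanSpace ℝ (Fin d) → ℝ)
    (gradT : EuclideanSpace ℝ (Fin d) → EuclideanSpace ℝ (Fin d))
    (hTconv : StrictConvexOn ℝ Set.univ T)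
    (hgrad : ∀ x, HasGradientAt T (gradT x) x)
    (θ θhat : EuclideanSpace ℝ (Fin d))
    (lam : ℝ) (hlam0 : 0 ≤ lam) (hlam1 : lam ≤ 1)
    (p : X → ℝ) (hp : ∀ x, p x = Real.exp (⟪θhat, φ x⟫ - T θhat))
    (hprob : ∫ x, p x ∂ν = 1)
    (hintφ : Integrable (fun x => p x • φ x) ν)
    (hmean : ∫ x, p x • φ x ∂ν = gradT θhat)
    (D : EuclideanSpace ℝ (Fin d) → ℝ)
    (hD : ∀ u, D u = T u - T θhat - ⟪u - θhat, gradT θhat⟫)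
    (θ' : EuclideanSpace ℝ (Fin d)) (hθ' : θ' = lam • θhat + (1 - lam) • θ) :
    (∫ x, (⟪θ' - θ, φ x⟫ - T θ' + T θ) * p x ∂ν) = D θ - D θ'
      ∧ lam * D θ ≤ ∫ x, (⟪θ' - θ, φ x⟫ - T θ' + T θ) * p x ∂ν
      ∧ 0 ≤ lam * D θ
      ∧ (0 < lam → θ ≠ θhat →
          0 < ∫ x, (⟪θ' - θ, φ x⟫ - T θ' + T θ) * p x ∂ν) := by
  have hpint : Integrable p ν := by
    by_contra h
    rw [integral_undef h] at hprob
    norm_num at hprob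
  -- the integral computation
  have key : (∫ x, (⟪θ' - θ, φ x⟫ - T θ' + T θ) * p x ∂ν)
      = ⟪θ' - θ, gradT θhat⟫ + (T θ - T θ') := by
    have heq : ∀ x, (⟪θ' - θ, φ x⟫ - T θ' + T θ) * p x
        = ⟪θ' - θ, p x • φ x⟫ + (T θ - T θ') * p x := by
      intro x
      rw [real_inner_smul_right]
      ring
    rw [integral_congr_ae (Filter.Eventually.of_forall heq),
      integral_add (hintφ.const_inner _) (hpint.const_mul _),
      integral_inner hintφ, integral_const_mul, hprob, hmean]
    ring
  -- inner product identities
  have hI' : ⟪θ' - θhat, gradT θhat⟫ = (1 - lam) * ⟪θ - θhat, gradT θhat⟫ := by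
    have : θ' - θhat = (1 - lam) • (θ - θhat) := by rw [hθ']; module
    rw [this, real_inner_smul_left]
  have hIc : ⟪θ' - θ, gradT θhat⟫ = ⟪θ' - θhat, gradT θhat⟫ - ⟪θ - θhat, gradT θhat⟫ := by
    rw [← inner_sub_left]; congr 1; abel
  -- part 1
  have h1 : (∫ x, (⟪θ' - θ, φ x⟫ - T θ' + T θ) * p x ∂ν) = D θ - D θ' := by
    rw [key, hD θ, hD θ', hIc]; ring
  -- convexity bound
  have hTmix : T θ' ≤ lam * T θhat + (1 - lam) * T θ := by
    have := hTconv.convexOn.2 (Set.mem_univ θhat) (Set.mem_univ θ) hlam0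
      (sub_nonneg.2 hlam1) (by ring)
    rw [hθ']
    simpa [smul_eq_mul] using this
  -- part 2
  have h2 : lam * D θ ≤ ∫ x, (⟪θ' - θ, φ x⟫ - T θ' + T θ) * p x ∂ν := by
    rw [key, hD θ, hIc, hI']
    nlinarith [hTmix]
  -- nonnegativity of D θ
  have hDθ : 0 ≤ D θ := by
    rcases eq_or_ne θ θhat with h | h
    · simp [hD, h]
    · have := aux_bregman_pos T gradT hTconv hgrad θhat θ h
      rw [hD θ]; linarith
  refine ⟨h1, h2, mul_nonneg hlam0 hDθ, fun hl hne => ?_⟩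
  have hpos : 0 < D θ := by
    have := aux_bregman_pos T gradT hTconv hgrad θhat θ hne
    rw [hD θ]; linarith
  calc (0:ℝ) < lam * D θ := mul_pos hl hpos
    _ ≤ _ := h2
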